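/- For every odd positive integer n and all integers r and s, ∑_{k=0}^{n} C(2n, 2k) * F(3k+r) * F(3k+s) = 2^(2n-1) * F(n) * F(3n+r+s). -/

import Mathlib

open Finset
open Finset

private lemma sum_range_even {R : Type*} [AddCommMonoid R] (f : ℕ → R) (m : ℕ)
    (h : ∀ k, f (2 * k + 1) = 0) :
    ∑ j ∈ range (2 * m), f j = ∑ k ∈ range m, f (2 * k) := by
  induction m with
  | zero => simp
  | succ m ih =>
    have e : 2 * (m + 1) = (2 * m + 1) + 1 := by ring
    rw [e, sum_range_succ, sum_range_succ, ih, h m, add_zero, sum_range_succ]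

private lemma even_sum {R : Type*} [CommRing R] (z : R) (n : ℕ) :
    ∑ k ∈ range (n + 1), 2 * ((2 * n).choose (2 * k) : R) * (z ^ 2) ^ k
      = (1 + z) ^ (2 * n) + (1 - z) ^ (2 * n) := by
  have h1 : (1 + z) ^ (2 * n) = ∑ j ∈ range (2 * n + 1), z ^ j * ((2 * n).choose j : R) := by
    rw [add_comm, add_pow]
    exact sum_congr rfl fun j hj => by simp
  have h2 : (1 - z) ^ (2 * n) = ∑ j ∈ range (2 * n + 1), (-z) ^ j * ((2 * n).choose j : R) := by
    rw [sub_eq_add_neg, add_comm, add_pow]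
    exact sum_congr rfl fun j hj => by simp
  set f : ℕ → R := fun j => (z ^ j + (-z) ^ j) * ((2 * n).choose j : R) with hf
  have hodd : ∀ k, f (2 * k + 1) = 0 := by
    intro k
    have hne : (-z) ^ (2 * k + 1) = -(z ^ (2 * k + 1)) := Odd.neg_pow ⟨k, by ring⟩ z
    simp [hf, hne]
  have hfsum : (1 + z) ^ (2 * n) + (1 - z) ^ (2 * n) = ∑ j ∈ range (2 * n + 1), f j := by
    rw [h1, h2, ← sum_add_distrib]
    exact sum_congr rfl fun j hj => by simp [hf]; ring
  have hext : ∑ j ∈ range (2 * (n + 1)), f j = ∑ j ∈ range (2 * n + 1), f j := by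
    have e : 2 * (n + 1) = (2 * n + 1) + 1 := by ring
    rw [e, sum_range_succ, hodd n, add_zero]
  rw [hfsum, ← hext, sum_range_even f (n + 1) hodd]
  refine sum_congr rfl fun k hk => ?_
  have hne : (-z) ^ (2 * k) = z ^ (2 * k) := Even.neg_pow ⟨k, by ring⟩ z
  simp [hf, hne, pow_mul]
  ring

private lemma sumalt (n : ℕ) (hodd : Odd n) :
    ∑ k ∈ range (n + 1), ((2 * n).choose (2 * k) : ℤ) * (-1) ^ k = 0 := by
  have h := even_sum (Complex.I) n
  rw [Complex.I_sq] at h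
  have h1 : (1 + Complex.I) ^ (2 * n) = (2 * Complex.I) ^ n := by
    rw [pow_mul]; congr 1
    have : Complex.I ^ 2 = -1 := Complex.I_sq
    ring_nf
    rw [Complex.I_sq]; ring
  have h2 : (1 - Complex.I) ^ (2 * n) = (-(2 * Complex.I)) ^ n := by
    rw [pow_mul]; congr 1
    ring_nf
    rw [Complex.I_sq]; ring
  rw [h1, h2, Odd.neg_pow hodd] at h
  have h0 : (∑ k ∈ range (n + 1), 2 * ((2 * n).choose (2 * k) : ℂ) * (-1) ^ k) = 0 := by
    rw [h]; ring
  have h0' : ((2 * ∑ k ∈ range (n + 1), ((2 * n).choose (2 * k) : ℤ) * (-1) ^ k : ℤ) : ℂ) = 0 := by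
    push_cast
    rw [mul_sum]
    rw [← h0]
    exact sum_congr rfl fun k hk => by ring
  have : (2 * ∑ k ∈ range (n + 1), ((2 * n).choose (2 * k) : ℤ) * (-1) ^ k : ℤ) = 0 := by
    exact_mod_cast h0'
  omega

noncomputable def phR : ℝ := (1 + Real.sqrt 5) / 2
noncomputable def psR : ℝ := (1 - Real.sqrt 5) / 2

private lemma hs2 : Real.sqrt 5 * Real.sqrt 5 = 5 := Real.mul_self_sqrt (by norm_num)

private lemma hp2 : phR ^ 2 = phR + 1 := by
  unfold phR; linear_combination hs2 / 4

private lemma hq2 : psR ^ 2 = psR + 1 := by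
  unfold psR; linear_combination hs2 / 4

private lemma hpq : phR * psR = -1 := by
  unfold phR psR; linear_combination -hs2 / 4

private lemma hp0 : phR ≠ 0 := by
  intro h
  have := hpq
  rw [h] at this
  norm_num at this

private lemma hq0 : psR ≠ 0 := by
  intro h
  have := hpq
  rw [h] at this
  norm_num at this

private lemma hd : phR - psR = Real.sqrt 5 := by unfold phR psR; ring

private lemma h1p3 : 1 + phR ^ 3 = 2 * phR ^ 2 := by linear_combination (phR - 1) * hp2
private lemma h1m3 : 1 - phR ^ 3 = -(2 * phR) := by linear_combination (-(phR + 1)) * hp2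
private lemma h1p3' : 1 + psR ^ 3 = 2 * psR ^ 2 := by linear_combination (psR - 1) * hq2
private lemma h1m3' : 1 - psR ^ 3 = -(2 * psR) := by linear_combination (-(psR + 1)) * hq2

private lemma pow_rec {x : ℝ} (hx : x ≠ 0) (h2 : x ^ 2 = x + 1) (j : ℤ) :
    x ^ j = x ^ (j - 1) + x ^ (j - 2) := by
  have e : x ^ j = x ^ (j - 2) * x ^ 2 := by
    rw [← zpow_natCast x 2, ← zpow_add₀ hx]
    norm_num
  have e1 : x ^ (j - 1) = x ^ (j - 2) * x := by
    rw [← zpow_add_one₀ hx]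
    congr 1
    ring
  rw [e, e1, h2]; ring

theorem stmt18 (F : ℤ → ℤ) (hF0 : F 0 = 0) (hF1 : F 1 = 1)
    (hF : ∀ j : ℤ, F j = F (j - 1) + F (j - 2)) (n : ℕ) (hn : 0 < n) (hodd : Odd n) (r s : ℤ) :
    ∑ k ∈ Finset.range (n + 1),
        ((2 * n).choose (2 * k) : ℤ) * F (3 * (k : ℤ) + r) * F (3 * (k : ℤ) + s)
      = 2 ^ (2 * n - 1) * F (n : ℤ) * F (3 * (n : ℤ) + r + s) := by
  have hS : True := trivial
  have binet : ∀ m : ℤ, (F m : ℝ) * Real.sqrt 5 = phR ^ m - psR ^ m := by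
    have key : ∀ m : ℤ, ((F m : ℝ) * Real.sqrt 5 = phR ^ m - psR ^ m) ∧
        ((F (m + 1) : ℝ) * Real.sqrt 5 = phR ^ (m + 1) - psR ^ (m + 1)) := by
      intro m
      induction m using Int.induction_on with
      | zero =>
        constructor
        · simp [hF0]
        · have e : (0 : ℤ) + 1 = 1 := by ring
          rw [e, hF1, zpow_one, zpow_one, hd]
          push_cast
          ring
      | succ i ih =>
        refine ⟨ih.2, ?_⟩
        have hr := hF ((i : ℤ) + 1 + 1)
        have p1 := pow_rec hp0 hp2 ((i : ℤ) + 1 + 1)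
        have p2 := pow_rec hq0 hq2 ((i : ℤ) + 1 + 1)
        have e1 : (i : ℤ) + 1 + 1 - 1 = (i : ℤ) + 1 := by ring
        have e2 : (i : ℤ) + 1 + 1 - 2 = (i : ℤ) := by ring
        rw [e1, e2] at hr p1 p2
        rw [hr]
        push_cast
        rw [p1, p2]
        linear_combination ih.1 + ih.2
      | pred i ih =>
        have e3 : -(i : ℤ) - 1 + 1 = -(i : ℤ) := by ring
        refine ⟨?_, by rw [e3]; exact ih.1⟩
        have hr := hF (-(i : ℤ) + 1)
        have p1 := pow_rec hp0 hp2 (-(i : ℤ) + 1)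
        have p2 := pow_rec hq0 hq2 (-(i : ℤ) + 1)
        have e1 : -(i : ℤ) + 1 - 1 = -(i : ℤ) := by ring
        have e2 : -(i : ℤ) + 1 - 2 = -(i : ℤ) - 1 := by ring
        rw [e1, e2] at hr p1 p2
        have hz : F (-(i : ℤ) - 1) = F (-(i : ℤ) + 1) - F (-(i : ℤ)) := by linarith [hr]
        have hF' : (F (-(i : ℤ) - 1) : ℝ) = (F (-(i : ℤ) + 1) : ℝ) - (F (-(i : ℤ)) : ℝ) := by
          rw [hz]; push_cast; ring
        have goal1 : (F (-(i : ℤ) - 1) : ℝ) * Real.sqrt 5 = phR ^ (-(i : ℤ) - 1) - psR ^ (-(i : ℤ) - 1) := by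
          rw [hF']
          have := ih.1
          have := ih.2
          linear_combination ih.2 - ih.1 + p1 - p2
        exact goal1
    exact fun m => (key m).1
  -- main computation
  have hpqn : phR ^ n * psR ^ n = -1 := by
    rw [← mul_pow, hpq, Odd.neg_one_pow hodd]
  have hsplit : ∀ (x : ℝ), x ≠ 0 → ∀ (t : ℤ) (k : ℕ),
      x ^ (3 * (k : ℤ) + t) = (x ^ 3) ^ k * x ^ t := by
    intro x hx t k
    rw [zpow_add₀ hx]
    congr 1
    rw [zpow_mul, zpow_natCast]
    norm_cast
  have hterm : ∀ k : ℕ,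
      (phR ^ (3 * (k : ℤ) + r) - psR ^ (3 * (k : ℤ) + r)) *
        (phR ^ (3 * (k : ℤ) + s) - psR ^ (3 * (k : ℤ) + s))
      = (phR ^ 6) ^ k * (phR ^ r * phR ^ s) + (psR ^ 6) ^ k * (psR ^ r * psR ^ s)
        - (-1 : ℝ) ^ k * (phR ^ r * psR ^ s + phR ^ s * psR ^ r) := by
    intro k
    rw [hsplit phR hp0 r k, hsplit phR hp0 s k, hsplit psR hq0 r k, hsplit psR hq0 s k]
    have hx2 : (phR ^ 6) ^ k = ((phR ^ 3) ^ k) ^ 2 := by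
      rw [← pow_mul, ← pow_mul, ← pow_mul]; congr 1; ring
    have hy2 : (psR ^ 6) ^ k = ((psR ^ 3) ^ k) ^ 2 := by
      rw [← pow_mul, ← pow_mul, ← pow_mul]; congr 1; ring
    have h33 : phR ^ 3 * psR ^ 3 = -1 := by
      rw [← mul_pow, hpq]; norm_num
    have hxy : (phR ^ 3) ^ k * (psR ^ 3) ^ k = (-1 : ℝ) ^ k := by
      rw [← mul_pow, h33]
    rw [hx2, hy2]
    linear_combination (-(phR ^ r * psR ^ s) - (phR ^ s * psR ^ r)) * hxy
  have hA : ∑ k ∈ range (n + 1), 2 * ((2 * n).choose (2 * k) : ℝ) * (phR ^ 6) ^ k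
      = 2 ^ (2 * n) * (phR ^ n) ^ 4 + 2 ^ (2 * n) * (phR ^ n) ^ 2 := by
    have h := even_sum (phR ^ 3) n
    have e6 : ((phR ^ 3) ^ 2) = phR ^ 6 := by rw [← pow_mul]
    rw [e6, h1p3, h1m3, Even.neg_pow ⟨n, by ring⟩, mul_pow, mul_pow] at h
    have e1 : (phR ^ 2) ^ (2 * n) = (phR ^ n) ^ 4 := by
      rw [← pow_mul, ← pow_mul]; congr 1; ring
    have e2 : phR ^ (2 * n) = (phR ^ n) ^ 2 := by
      rw [← pow_mul]; congr 1; ring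
    rw [h, e1, e2]
  have hB : ∑ k ∈ range (n + 1), 2 * ((2 * n).choose (2 * k) : ℝ) * (psR ^ 6) ^ k
      = 2 ^ (2 * n) * (psR ^ n) ^ 4 + 2 ^ (2 * n) * (psR ^ n) ^ 2 := by
    have h := even_sum (psR ^ 3) n
    have e6 : ((psR ^ 3) ^ 2) = psR ^ 6 := by rw [← pow_mul]
    rw [e6, h1p3', h1m3', Even.neg_pow ⟨n, by ring⟩, mul_pow, mul_pow] at h
    have e1 : (psR ^ 2) ^ (2 * n) = (psR ^ n) ^ 4 := by
      rw [← pow_mul, ← pow_mul]; congr 1; ring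
    have e2 : psR ^ (2 * n) = (psR ^ n) ^ 2 := by
      rw [← pow_mul]; congr 1; ring
    rw [h, e1, e2]
  have hC : ∑ k ∈ range (n + 1), 2 * ((2 * n).choose (2 * k) : ℝ) * (-1 : ℝ) ^ k = 0 := by
    have h := sumalt n hodd
    have h' : ((∑ k ∈ range (n + 1), ((2 * n).choose (2 * k) : ℤ) * (-1) ^ k : ℤ) : ℝ) = 0 := by
      rw [h]; norm_num
    push_cast at h'
    calc ∑ k ∈ range (n + 1), 2 * ((2 * n).choose (2 * k) : ℝ) * (-1 : ℝ) ^ k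
        = 2 * ∑ k ∈ range (n + 1), ((2 * n).choose (2 * k) : ℝ) * (-1 : ℝ) ^ k := by
          rw [mul_sum]; exact sum_congr rfl fun k _ => by ring
      _ = 0 := by rw [h']; ring
  have key : (∑ k ∈ range (n + 1),
        ((2 * n).choose (2 * k) : ℝ) * (F (3 * (k : ℤ) + r) : ℝ) * (F (3 * (k : ℤ) + s) : ℝ))
          * (Real.sqrt 5 * Real.sqrt 5) * 2
      = ((2 : ℝ) ^ (2 * n - 1) * (F (n : ℤ) : ℝ) * (F (3 * (n : ℤ) + r + s) : ℝ))
          * (Real.sqrt 5 * Real.sqrt 5) * 2 := by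
    have step1 : (∑ k ∈ range (n + 1),
        ((2 * n).choose (2 * k) : ℝ) * (F (3 * (k : ℤ) + r) : ℝ) * (F (3 * (k : ℤ) + s) : ℝ))
          * (Real.sqrt 5 * Real.sqrt 5) * 2
        = ∑ k ∈ range (n + 1),
            (phR ^ r * phR ^ s * (2 * ((2 * n).choose (2 * k) : ℝ) * (phR ^ 6) ^ k)
            + psR ^ r * psR ^ s * (2 * ((2 * n).choose (2 * k) : ℝ) * (psR ^ 6) ^ k)
            - (phR ^ r * psR ^ s + phR ^ s * psR ^ r)
                * (2 * ((2 * n).choose (2 * k) : ℝ) * (-1 : ℝ) ^ k)) := by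
      rw [sum_mul, sum_mul]
      refine sum_congr rfl fun k _ => ?_
      have b1 := binet (3 * (k : ℤ) + r)
      have b2 := binet (3 * (k : ℤ) + s)
      have ht := hterm k
      linear_combination
        (2 * ((2 * n).choose (2 * k) : ℝ) * ((F (3 * (k : ℤ) + r) : ℝ) * Real.sqrt 5)) * b2
        + (2 * ((2 * n).choose (2 * k) : ℝ)
            * (phR ^ (3 * (k : ℤ) + s) - psR ^ (3 * (k : ℤ) + s))) * b1
        + (2 * ((2 * n).choose (2 * k) : ℝ)) * ht
    rw [step1, sum_sub_distrib, sum_add_distrib, ← mul_sum, ← mul_sum, ← mul_sum, hA, hB, hC]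
    -- right-hand side
    have b1 := binet (n : ℤ)
    have b2 := binet (3 * (n : ℤ) + r + s)
    have easso : 3 * (n : ℤ) + r + s = 3 * (n : ℤ) + (r + s) := by ring
    have hx : phR ^ (3 * (n : ℤ) + r + s) = (phR ^ n) ^ 3 * (phR ^ r * phR ^ s) := by
      rw [easso, hsplit phR hp0 (r + s) n, zpow_add₀ hp0, ← pow_mul, ← pow_mul, mul_comm 3 n]
    have hy : psR ^ (3 * (n : ℤ) + r + s) = (psR ^ n) ^ 3 * (psR ^ r * psR ^ s) := by
      rw [easso, hsplit psR hq0 (r + s) n, zpow_add₀ hq0, ← pow_mul, ← pow_mul, mul_comm 3 n]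
    have hnz : phR ^ ((n : ℕ) : ℤ) = phR ^ n := zpow_natCast phR n
    have hnz' : psR ^ ((n : ℕ) : ℤ) = psR ^ n := zpow_natCast psR n
    rw [hx, hy] at b2
    rw [hnz, hnz'] at b1
    have hprod : ((F (n : ℤ) : ℝ) * Real.sqrt 5) * ((F (3 * (n : ℤ) + r + s) : ℝ) * Real.sqrt 5)
        = (phR ^ n - psR ^ n) * ((phR ^ n) ^ 3 * (phR ^ r * phR ^ s)
            - (psR ^ n) ^ 3 * (psR ^ r * psR ^ s)) := by
      rw [b1, b2]
    have e2 : (2 : ℝ) ^ (2 * n - 1) * 2 = 2 ^ (2 * n) := by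
      rw [← pow_succ]; congr 1; omega
    linear_combination
      (2 ^ (2 * n) * ((phR ^ n) ^ 2 * (phR ^ r * phR ^ s)
        + (psR ^ n) ^ 2 * (psR ^ r * psR ^ s))) * hpqn
      - ((phR ^ n - psR ^ n) * ((phR ^ n) ^ 3 * (phR ^ r * phR ^ s)
        - (psR ^ n) ^ 3 * (psR ^ r * psR ^ s))) * e2
      - ((2 : ℝ) ^ (2 * n - 1) * 2) * hprod
  have key2 : (∑ k ∈ range (n + 1),
        ((2 * n).choose (2 * k) : ℝ) * (F (3 * (k : ℤ) + r) : ℝ) * (F (3 * (k : ℤ) + s) : ℝ))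
      = (2 : ℝ) ^ (2 * n - 1) * (F (n : ℤ) : ℝ) * (F (3 * (n : ℤ) + r + s) : ℝ) := by
    rw [hs2] at key
    linarith
  exact_mod_cast key2
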